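/- Let s>0 and λ>0, and let μ be the Gamma distribution on (0,∞) with density (λ^{2s}/Γ(2s)) y^{2s-1} e^{-λ y}. Define, for f:(0,∞)²→ℝ polynomial, (𝓛 f)(y_1,y_2) = ∫_0^{y_1}(dα/α)(1-α/y_1)^{2s-1}[f(y_1-α,y_2+α)-f(y_1,y_2)] + ∫_0^{y_2}(dα/α)(1-α/y_2)^{2s-1}[f(y_1+α,y_2-α)-f(y_1,y_2)]. Then for all polynomials f,g: ∫∫ (𝓛f)(y_1,y_2) g(y_1,y_2) μ(dy_1)μ(dy_2) = ∫∫ f(y_1,y_2) (𝓛g)(y_1,y_2) μ(dy_1)μ(dy_2). -/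

import Mathlib

open MeasureTheory Real Set

noncomputable section

namespace HeatModel

/-- Density of the Gamma(2s, lam) distribution. -/
def gammaDensity (s lam : ℝ) (y : ℝ) : ℝ :=
  lam ^ (2 * s) / Real.Gamma (2 * s) * y ^ (2 * s - 1) * Real.exp (-(lam * y))

/-- The bulk exchange generator of the integrable heat conduction model on one bond. -/
def bondGen (s : ℝ) (f : ℝ → ℝ → ℝ) (y₁ y₂ : ℝ) : ℝ :=
  (∫ a in Set.Ioo 0 y₁, (1 - a / y₁) ^ (2 * s - 1) / a * (f (y₁ - a) (y₂ + a) - f y₁ y₂))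
    + ∫ a in Set.Ioo 0 y₂, (1 - a / y₂) ^ (2 * s - 1) / a * (f (y₁ + a) (y₂ - a) - f y₁ y₂)

/-! ### Polynomial lemmas -/

open MvPolynomial in
lemma poly_continuous {k : ℕ} (p : MvPolynomial (Fin k) ℝ) :
    Continuous fun v : Fin k → ℝ => eval v p := by
  induction p using MvPolynomial.induction_on with
  | C a => simpa using continuous_const
  | add p q hp hq => simp only [eval_add]; exact hp.add hq
  | mul_X p n hp => simp only [eval_mul, eval_X]; exact hp.mul (continuous_apply n)

open MvPolynomial in
lemma poly_bound {k : ℕ} (p : MvPolynomial (Fin k) ℝ) :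
    ∃ C : ℝ, 0 ≤ C ∧ ∃ n : ℕ, ∀ v : Fin k → ℝ,
      |eval v p| ≤ C * (1 + ∑ i, |v i|) ^ n := by
  have key : ∀ v : Fin k → ℝ, (1:ℝ) ≤ 1 + ∑ i, |v i| := by
    intro v
    have : (0:ℝ) ≤ ∑ i, |v i| := Finset.sum_nonneg fun i _ => abs_nonneg _
    linarith
  induction p using MvPolynomial.induction_on with
  | C a =>
      exact ⟨|a|, abs_nonneg _, 0, fun v => by simp⟩
  | add p q hp hq =>
      obtain ⟨C₁, hC₁, n₁, h₁⟩ := hp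
      obtain ⟨C₂, hC₂, n₂, h₂⟩ := hq
      refine ⟨C₁ + C₂, by linarith, max n₁ n₂, fun v => ?_⟩
      have b1 : (1 + ∑ i, |v i|) ^ n₁ ≤ (1 + ∑ i, |v i|) ^ max n₁ n₂ :=
        pow_le_pow_right₀ (key v) (le_max_left _ _)
      have b2 : (1 + ∑ i, |v i|) ^ n₂ ≤ (1 + ∑ i, |v i|) ^ max n₁ n₂ :=
        pow_le_pow_right₀ (key v) (le_max_right _ _)
      calc |eval v (p + q)| ≤ |eval v p| + |eval v q| := by
            simpa [eval_add] using abs_add_le _ _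
        _ ≤ C₁ * (1 + ∑ i, |v i|) ^ max n₁ n₂ + C₂ * (1 + ∑ i, |v i|) ^ max n₁ n₂ := by
            nlinarith [h₁ v, h₂ v]
        _ = (C₁ + C₂) * (1 + ∑ i, |v i|) ^ max n₁ n₂ := by ring
  | mul_X p n hp =>
      obtain ⟨C, hC, m, h⟩ := hp
      refine ⟨C, hC, m + 1, fun v => ?_⟩
      have hvn : |v n| ≤ 1 + ∑ i, |v i| := by
        have : |v n| ≤ ∑ i, |v i| :=
          Finset.single_le_sum (f := fun i => |v i|) (fun i _ => abs_nonneg _) (Finset.mem_univ n)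
        linarith
      have hpow : (0:ℝ) ≤ (1 + ∑ i, |v i|) ^ m := by positivity
      calc |eval v (p * X n)| = |eval v p| * |v n| := by simp [eval_mul, abs_mul]
        _ ≤ (C * (1 + ∑ i, |v i|) ^ m) * (1 + ∑ i, |v i|) := by
            apply mul_le_mul (h v) hvn (abs_nonneg _)
            positivity
        _ = C * (1 + ∑ i, |v i|) ^ (m + 1) := by ring

open MvPolynomial in
lemma diff_factor (p : MvPolynomial (Fin 2) ℝ) :
    ∃ r : MvPolynomial (Fin 3) ℝ, ∀ y₁ y₂ a : ℝ,
      eval ![y₁ - a, y₂ + a] p - eval ![y₁, y₂] p = a * eval ![y₁, y₂, a] r := by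
  induction p using MvPolynomial.induction_on with
  | C c => exact ⟨0, fun y₁ y₂ a => by simp⟩
  | add p q hp hq =>
      obtain ⟨r₁, h₁⟩ := hp
      obtain ⟨r₂, h₂⟩ := hq
      refine ⟨r₁ + r₂, fun y₁ y₂ a => ?_⟩
      have := h₁ y₁ y₂ a; have := h₂ y₁ y₂ a
      simp only [eval_add]
      linarith
  | mul_X p n hp =>
      obtain ⟨r, hr⟩ := hp
      refine ⟨r * (![X 0 - X 2, X 1 + X 2] n) + (![-1, 1] n) * rename (Fin.castSucc) p,
        fun y₁ y₂ a => ?_⟩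
      have hcomp : ![y₁, y₂, a] ∘ Fin.castSucc = ![y₁, y₂] := by
        funext i; fin_cases i <;> rfl
      have hren : eval ![y₁, y₂, a] (rename (Fin.castSucc) p) = eval ![y₁, y₂] p := by
        rw [eval_rename, hcomp]
      have hIH := hr y₁ y₂ a
      fin_cases n <;>
        simp only [eval_add, eval_mul, eval_sub, eval_X, eval_neg, map_one, map_neg, hren,
          Fin.zero_eta, Fin.mk_one, Matrix.cons_val_zero, Matrix.cons_val_one, Matrix.head_cons,
          Matrix.cons_val_two, Matrix.tail_cons]
      · linear_combination (y₁ - a) * hIH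
      · linear_combination (y₂ + a) * hIH

/-! ### Gamma density facts -/

lemma rho_meas {s lam : ℝ} : Measurable (gammaDensity s lam) := by
  unfold gammaDensity
  exact ((measurable_const.mul (measurable_id.pow measurable_const)).mul
    ((measurable_const.mul measurable_id).neg.exp))

lemma rho_nonneg {s lam : ℝ} (hs : 0 < s) (hlam : 0 < lam) {y : ℝ} (hy : 0 ≤ y) :
    0 ≤ gammaDensity s lam y := by
  unfold gammaDensity
  have h1 : 0 ≤ lam ^ (2*s) / Real.Gamma (2*s) :=
    div_nonneg (rpow_nonneg hlam.le _) (Real.Gamma_pos_of_pos (by linarith)).le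
  positivity

lemma one_add_pow_le (m : ℕ) {y : ℝ} (hy : 0 ≤ y) :
    (1 + y) ^ m ≤ 2 ^ m * (1 + y ^ m) := by
  rcases le_total y 1 with h | h
  · calc (1+y)^m ≤ 2^m := by
          apply pow_le_pow_left₀ (by linarith) (by linarith)
      _ ≤ 2^m * (1 + y^m) := by
          nlinarith [pow_nonneg hy m, pow_pos (show (0:ℝ)<2 by norm_num) m]
  · calc (1+y)^m ≤ (2*y)^m := by
          apply pow_le_pow_left₀ (by linarith) (by linarith)
      _ = 2^m * y^m := mul_pow 2 y m
      _ ≤ 2^m * (1 + y^m) := by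
          nlinarith [pow_pos (show (0:ℝ)<2 by norm_num) m]

lemma exp_int {lam : ℝ} (hlam : 0 < lam) {t : ℝ} (ht : -1 < t) :
    IntegrableOn (fun y : ℝ => y ^ t * Real.exp (-(lam * y))) (Ioi 0) := by
  have := integrableOn_rpow_mul_exp_neg_mul_rpow ht (one_pos : (0:ℝ) < 1) hlam
  refine this.congr_fun (fun x hx => ?_) measurableSet_Ioi
  simp only [rpow_one]
  ring_nf

lemma moment {s lam : ℝ} (hs : 0 < s) (hlam : 0 < lam) (m : ℕ) :
    IntegrableOn (fun y : ℝ => (1 + y) ^ m * gammaDensity s lam y) (Ioi 0) := by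
  set C := lam ^ (2*s) / Real.Gamma (2*s) with hC
  have hC0 : 0 ≤ C := div_nonneg (rpow_nonneg hlam.le _) (Real.Gamma_pos_of_pos (by linarith)).le
  have h1 : IntegrableOn (fun y : ℝ => y ^ (2*s-1) * Real.exp (-(lam*y))) (Ioi 0) :=
    exp_int hlam (by linarith)
  have h2 : IntegrableOn (fun y : ℝ => y ^ (2*s-1+(m:ℝ)) * Real.exp (-(lam*y))) (Ioi 0) :=
    exp_int hlam (by have : (0:ℝ) ≤ (m:ℝ) := Nat.cast_nonneg m; linarith)
  have hbig : IntegrableOn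
      (fun y : ℝ => C * 2^m * (y ^ (2*s-1) * Real.exp (-(lam*y))
        + y ^ (2*s-1+(m:ℝ)) * Real.exp (-(lam*y)))) (Ioi 0) :=
    (h1.add h2).const_mul _
  refine Integrable.mono' hbig ?_ ?_
  · exact (((measurable_const.add measurable_id).pow_const m).mul
      rho_meas).aestronglyMeasurable
  · filter_upwards [ae_restrict_mem measurableSet_Ioi] with y hy
    have hy0 : (0:ℝ) < y := hy
    have hrho : gammaDensity s lam y = C * (y ^ (2*s-1) * Real.exp (-(lam*y))) := by
      unfold gammaDensity; rw [hC]; ring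
    have hsplit : y ^ (2*s-1) * y ^ (m:ℝ) = y ^ (2*s-1+(m:ℝ)) := (rpow_add hy0 _ _).symm
    have hym : y ^ (m:ℝ) = y ^ m := rpow_natCast y m
    have hpow : (1+y)^m ≤ 2^m * (1 + y^m) := one_add_pow_le m hy0.le
    have he : 0 < Real.exp (-(lam*y)) := Real.exp_pos _
    have hyp : 0 ≤ y ^ (2*s-1) := rpow_nonneg hy0.le _
    rw [Real.norm_eq_abs, abs_of_nonneg (by
      have := rho_nonneg hs hlam hy0.le
      positivity)]
    rw [hrho]
    calc (1+y)^m * (C * (y ^ (2*s-1) * Real.exp (-(lam*y))))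
        ≤ (2^m * (1 + y^m)) * (C * (y ^ (2*s-1) * Real.exp (-(lam*y)))) := by
          apply mul_le_mul_of_nonneg_right hpow; positivity
      _ = C * 2^m * (y ^ (2*s-1) * Real.exp (-(lam*y)) + (y ^ (2*s-1) * y^m) * Real.exp (-(lam*y))) := by ring
      _ = C * 2^m * (y ^ (2*s-1) * Real.exp (-(lam*y)) + y ^ (2*s-1+(m:ℝ)) * Real.exp (-(lam*y))) := by
          rw [← hsplit, hym]

/-! ### Kernel integral -/

lemma ker_integrableOn {s : ℝ} (hs : 0 < s) {y : ℝ} (hy : 0 < y) :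
    IntegrableOn (fun a : ℝ => (1 - a / y) ^ (2*s - 1)) (Ioo 0 y) := by
  have hint : IntervalIntegrable (fun x : ℝ => x ^ (2*s-1)) volume 0 y :=
    intervalIntegral.intervalIntegrable_rpow' (by linarith)
  have h2 : IntervalIntegrable (fun a : ℝ => (y - a) ^ (2*s-1)) volume 0 y := by
    have := hint.comp_sub_left y
    simpa using this.symm
  have h3 : IntegrableOn (fun a : ℝ => (y - a) ^ (2*s-1)) (Ioo 0 y) :=
    (intervalIntegrable_iff_integrableOn_Ioo_of_le hy.le).mp h2
  have h4 : IntegrableOn (fun a : ℝ => (y - a) ^ (2*s-1) * (y ^ (2*s-1))⁻¹) (Ioo 0 y) :=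
    h3.mul_const _
  refine h4.congr_fun (fun a ha => ?_) measurableSet_Ioo
  rw [show 1 - a / y = (y - a) / y by field_simp,
    Real.div_rpow (by linarith [ha.2]) hy.le, div_eq_mul_inv]

lemma ker_value {s : ℝ} (hs : 0 < s) {y : ℝ} (hy : 0 < y) :
    ∫ a in Ioo 0 y, (1 - a / y) ^ (2*s - 1) = y / (2*s) := by
  have hcongr : ∫ a in Ioo 0 y, (1 - a / y) ^ (2*s-1)
      = ∫ a in Ioo 0 y, (y - a) ^ (2*s-1) * (y ^ (2*s-1))⁻¹ := by
    refine setIntegral_congr_fun measurableSet_Ioo (fun a ha => ?_)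
    rw [show 1 - a / y = (y - a) / y by field_simp,
      Real.div_rpow (by linarith [ha.2]) hy.le, div_eq_mul_inv]
  rw [hcongr, MeasureTheory.integral_mul_const, ← integral_Ioc_eq_integral_Ioo,
    ← intervalIntegral.integral_of_le hy.le]
  have hrefl : (∫ a in (0:ℝ)..y, (y - a) ^ (2*s-1)) = ∫ x in (0:ℝ)..y, x ^ (2*s-1) := by
    have := intervalIntegral.integral_comp_sub_left (a := 0) (b := y)
      (fun x : ℝ => x ^ (2*s-1)) y
    simpa using this
  rw [hrefl, integral_rpow (Or.inl (by linarith))]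
  have h0 : (0:ℝ) ^ (2*s-1+1) = 0 := by
    rw [zero_rpow]; linarith
  rw [h0]
  have hy2s : y ^ (2*s-1+1) = y ^ (2*s-1) * y := by
    rw [rpow_add hy, rpow_one]
  rw [hy2s]
  have hne : y ^ (2*s-1) ≠ 0 := (rpow_pos_of_pos hy _).ne'
  field_simp
  ring

/-! ### The shear map -/

def sigmaf : ℝ×ℝ×ℝ → ℝ×ℝ×ℝ := fun w => (w.2.1 + w.2.2, w.1 - w.2.2, w.2.2)

def sigmaE : (ℝ×ℝ×ℝ) ≃ᵐ (ℝ×ℝ×ℝ) where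
  toFun := sigmaf
  invFun := sigmaf
  left_inv := fun w => by simp [sigmaf]
  right_inv := fun w => by simp [sigmaf]
  measurable_toFun := by
    show Measurable sigmaf
    unfold sigmaf; fun_prop
  measurable_invFun := by
    show Measurable sigmaf
    unfold sigmaf; fun_prop

lemma volume_triple : (volume : Measure (ℝ×ℝ×ℝ))
    = (volume : Measure ℝ).prod ((volume : Measure ℝ).prod (volume : Measure ℝ)) := rfl

lemma sigma_mp : MeasurePreserving sigmaf (volume : Measure (ℝ×ℝ×ℝ)) volume := by
  rw [volume_triple]
  set P := (volume : Measure ℝ)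
  have hm1 : MeasurePreserving (Prod.swap : ℝ×(ℝ×ℝ) → (ℝ×ℝ)×ℝ) (P.prod (P.prod P))
      ((P.prod P).prod P) := Measure.measurePreserving_swap
  have hm2 : MeasurePreserving
      (fun q : (ℝ×ℝ)×ℝ => ((q.1.1 + q.1.2, q.1.2), q.2 - q.1.2))
      ((P.prod P).prod P) ((P.prod P).prod P) := by
    refine MeasurePreserving.skew_product (g := fun (x : ℝ×ℝ) (y : ℝ) => y - x.2)
      (measurePreserving_add_prod P P) ?_ (Filter.Eventually.of_forall (fun x => ?_))
    · exact measurable_snd.sub (measurable_snd.comp measurable_fst)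
    · exact map_sub_right_eq_self P _
  have hm3a : MeasurePreserving (MeasurableEquiv.prodAssoc : ((ℝ×ℝ)×ℝ) ≃ᵐ (ℝ×(ℝ×ℝ)))
      ((P.prod P).prod P) (P.prod (P.prod P)) := measurePreserving_prodAssoc _ _ _
  have hm3b : MeasurePreserving (Prod.map (id : ℝ → ℝ) (Prod.swap : ℝ×ℝ → ℝ×ℝ))
      (P.prod (P.prod P)) (P.prod (P.prod P)) :=
    (MeasurePreserving.id P).prod Measure.measurePreserving_swap
  have hcomp := (hm3b.comp hm3a).comp (hm2.comp hm1)
  have : sigmaf = (Prod.map (id : ℝ → ℝ) (Prod.swap : ℝ×ℝ → ℝ×ℝ))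
      ∘ (MeasurableEquiv.prodAssoc : ((ℝ×ℝ)×ℝ) ≃ᵐ (ℝ×(ℝ×ℝ)))
      ∘ (fun q : (ℝ×ℝ)×ℝ => ((q.1.1 + q.1.2, q.1.2), q.2 - q.1.2))
      ∘ (Prod.swap : ℝ×(ℝ×ℝ) → (ℝ×ℝ)×ℝ) := rfl
  rw [this]
  exact hcomp

/-! ### The region -/

def R3 : Set (ℝ×ℝ×ℝ) := {w | 0 < w.1 ∧ 0 < w.2.1 ∧ 0 < w.2.2 ∧ w.2.2 < w.1}

lemma R3_meas : MeasurableSet R3 := by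
  have h1 : MeasurableSet {w : ℝ×ℝ×ℝ | 0 < w.1} :=
    measurableSet_lt measurable_const measurable_fst
  have h2 : MeasurableSet {w : ℝ×ℝ×ℝ | 0 < w.2.1} :=
    measurableSet_lt measurable_const (measurable_fst.comp measurable_snd)
  have h3 : MeasurableSet {w : ℝ×ℝ×ℝ | 0 < w.2.2} :=
    measurableSet_lt measurable_const (measurable_snd.comp measurable_snd)
  have h4 : MeasurableSet {w : ℝ×ℝ×ℝ | w.2.2 < w.1} :=
    measurableSet_lt (measurable_snd.comp measurable_snd) measurable_fst
  have : R3 = {w : ℝ×ℝ×ℝ | 0 < w.1} ∩ ({w | 0 < w.2.1} ∩ ({w | 0 < w.2.2} ∩ {w | w.2.2 < w.1})) := by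
    ext w; simp [R3, mem_setOf_eq, mem_inter_iff, and_assoc]
  rw [this]
  exact h1.inter (h2.inter (h3.inter h4))

lemma sigma_preimage_R3 (w : ℝ×ℝ×ℝ) : sigmaf w ∈ R3 ↔ w ∈ R3 := by
  obtain ⟨u, v, a⟩ := w
  simp only [sigmaf, R3, mem_setOf_eq]
  constructor
  · rintro ⟨h1, h2, h3, h4⟩
    exact ⟨by linarith, by linarith, h3, by linarith⟩
  · rintro ⟨h1, h2, h3, h4⟩
    exact ⟨by linarith, by linarith, h3, by linarith⟩

lemma pow_one_add_add {u v : ℝ} (hu : 0 ≤ u) (hv : 0 ≤ v) (N : ℕ) :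
    (1+u+v)^N ≤ (1+u)^N * (1+v)^N := by
  rw [← mul_pow]
  exact pow_le_pow_left₀ (by linarith) (by nlinarith) N


/-! ### Machinery: integrability of kernel-dominated functions on the region -/

section Machinery

variable {s lam : ℝ} {G : ℝ×ℝ×ℝ → ℝ} {K : ℝ} {N : ℕ}

/-- moment-type dominating function -/
def momFun (s lam : ℝ) (N : ℕ) : ℝ → ℝ :=
  (Ioi (0:ℝ)).indicator (fun v => (1+v)^N * gammaDensity s lam v)

/-- kernel dominating function -/
def kerFun (s u : ℝ) : ℝ → ℝ :=
  (Ioo (0:ℝ) u).indicator (fun a => (1 - a/u)^(2*s-1))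

lemma momFun_int (hs : 0 < s) (hlam : 0 < lam) (N : ℕ) :
    Integrable (momFun s lam N) :=
  (integrable_indicator_iff measurableSet_Ioi).2 (moment hs hlam N)

lemma momFun_nonneg (hs : 0 < s) (hlam : 0 < lam) (N : ℕ) (v : ℝ) :
    0 ≤ momFun s lam N v := by
  apply indicator_nonneg
  intro y hy
  have h0 : (0:ℝ) < y := hy
  have := rho_nonneg hs hlam h0.le
  positivity

lemma momFun_eq (hs : 0 < s) (hlam : 0 < lam) (N : ℕ) {v : ℝ} (hv : 0 < v) :
    momFun s lam N v = (1+v)^N * gammaDensity s lam v :=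
  indicator_of_mem hv _

lemma kerFun_int (hs : 0 < s) {u : ℝ} (hu : 0 < u) :
    Integrable (kerFun s u) :=
  (integrable_indicator_iff measurableSet_Ioo).2 (ker_integrableOn hs hu)

lemma kerFun_nonneg (s u : ℝ) (a : ℝ) : 0 ≤ kerFun s u a := by
  apply indicator_nonneg
  intro a ha
  have h1 : 0 < a := ha.1
  have h2 : a < u := ha.2
  have hu : 0 < u := lt_trans h1 h2
  have : a / u < 1 := (div_lt_one hu).2 h2
  exact rpow_nonneg (by linarith) _

lemma kerFun_integral (hs : 0 < s) {u : ℝ} (hu : 0 < u) :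
    ∫ a, kerFun s u a = u/(2*s) := by
  rw [kerFun, integral_indicator measurableSet_Ioo]
  exact ker_value hs hu

/-- The canonical pointwise bound for the indicator of a kernel-dominated function. -/
lemma indicator_bound (hs : 0 < s) (hlam : 0 < lam) (hK : 0 ≤ K)
    (hGb : ∀ w ∈ R3, |G w| ≤ gammaDensity s lam w.1 * gammaDensity s lam w.2.1 *
      (1 - w.2.2/w.1)^(2*s-1) * (K*(1+w.1+w.2.1)^N))
    (u : ℝ) (q : ℝ×ℝ) :
    ‖R3.indicator G (u, q)‖ ≤
      (K * gammaDensity s lam u * (1+u)^N * momFun s lam N q.1) * kerFun s u q.2 := by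
  by_cases hw : (u, q) ∈ R3
  · obtain ⟨hu, hv, ha, hau⟩ := id hw
    simp only at hu hv ha hau
    rw [indicator_of_mem hw, Real.norm_eq_abs,
      momFun_eq hs hlam N hv, kerFun,
      indicator_of_mem (show q.2 ∈ Ioo 0 u from ⟨ha, hau⟩)]
    refine (hGb (u,q) ⟨hu, hv, ha, hau⟩).trans ?_
    have e1 : 0 ≤ gammaDensity s lam u := rho_nonneg hs hlam hu.le
    have e2 : 0 ≤ gammaDensity s lam q.1 := rho_nonneg hs hlam hv.le
    have e3 : 0 ≤ (1 - q.2/u)^(2*s-1) := by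
      have : q.2 / u < 1 := (div_lt_one hu).2 hau
      exact rpow_nonneg (by linarith) _
    have e4 : (1+u+q.1)^N ≤ (1+u)^N * (1+q.1)^N := pow_one_add_add hu.le hv.le N
    calc gammaDensity s lam u * gammaDensity s lam q.1 * (1 - q.2/u)^(2*s-1)
          * (K*(1+u+q.1)^N)
        ≤ gammaDensity s lam u * gammaDensity s lam q.1 * (1 - q.2/u)^(2*s-1)
          * (K*((1+u)^N * (1+q.1)^N)) := by
          apply mul_le_mul_of_nonneg_left (mul_le_mul_of_nonneg_left e4 hK)
          positivity
      _ = (K * gammaDensity s lam u * (1+u)^N * ((1+q.1)^N * gammaDensity s lam q.1))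
          * (1 - q.2/u)^(2*s-1) := by ring
  · rw [indicator_of_notMem hw, norm_zero]
    have h1 : 0 ≤ momFun s lam N q.1 := momFun_nonneg hs hlam N q.1
    have h2 : 0 ≤ kerFun s u q.2 := kerFun_nonneg s u q.2
    by_cases hu : 0 < u
    · have := rho_nonneg hs hlam hu.le
      positivity
    · -- gammaDensity may be negative off the halfline; but kerFun vanishes when u ≤ 0
      have : kerFun s u q.2 = 0 := by
        apply indicator_of_notMem
        intro hmem
        exact hu (lt_trans hmem.1 hmem.2)
      rw [this, mul_zero]

lemma bound_int (hs : 0 < s) (hlam : 0 < lam) {u : ℝ} (hu : 0 < u) :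
    Integrable (fun q : ℝ×ℝ =>
      (K * gammaDensity s lam u * (1+u)^N * momFun s lam N q.1) * kerFun s u q.2)
      (volume : Measure (ℝ×ℝ)) := by
  rw [Measure.volume_eq_prod]
  exact ((momFun_int hs hlam N).const_mul _).mul_prod (kerFun_int hs hu)

lemma sec_int (hs : 0 < s) (hlam : 0 < lam) (hGm : Measurable G) (hK : 0 ≤ K)
    (hGb : ∀ w ∈ R3, |G w| ≤ gammaDensity s lam w.1 * gammaDensity s lam w.2.1 *
      (1 - w.2.2/w.1)^(2*s-1) * (K*(1+w.1+w.2.1)^N))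
    {u : ℝ} (hu : 0 < u) :
    Integrable (fun q : ℝ×ℝ => R3.indicator G (u, q)) (volume : Measure (ℝ×ℝ)) := by
  refine Integrable.mono' (bound_int hs hlam hu) ?_
    (Filter.Eventually.of_forall fun q => indicator_bound hs hlam hK hGb u q)
  exact ((hGm.indicator R3_meas).comp measurable_prodMk_left).aestronglyMeasurable

lemma full_int (hs : 0 < s) (hlam : 0 < lam) (hGm : Measurable G) (hK : 0 ≤ K)
    (hGb : ∀ w ∈ R3, |G w| ≤ gammaDensity s lam w.1 * gammaDensity s lam w.2.1 *
      (1 - w.2.2/w.1)^(2*s-1) * (K*(1+w.1+w.2.1)^N)) :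
    Integrable (R3.indicator G) (volume : Measure (ℝ×ℝ×ℝ)) := by
  rw [volume_triple]
  set MN := ∫ v, momFun s lam N v with hMN
  have hMN0 : 0 ≤ MN := integral_nonneg (momFun_nonneg hs hlam N)
  refine (integrable_prod_iff (hGm.indicator R3_meas).aestronglyMeasurable).2 ⟨?_, ?_⟩
  · refine Filter.Eventually.of_forall fun u => ?_
    by_cases hu : 0 < u
    · exact sec_int hs hlam hGm hK hGb hu
    · have hzero : (fun q : ℝ×ℝ => R3.indicator G (u,q)) = fun _ => 0 :=
        funext fun q => indicator_of_notMem (fun hw => hu hw.1) _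
      rw [hzero]
      exact integrable_zero _ _ _
  · refine Integrable.mono'
      (((momFun_int hs hlam (N+1)).const_mul (K * MN / (2*s)))) ?_
      (Filter.Eventually.of_forall fun u => ?_)
    · exact ((hGm.indicator R3_meas).norm.aestronglyMeasurable).integral_prod_right'
    · by_cases hu : 0 < u
      · have hb := fun q => indicator_bound hs hlam hK hGb u q
        have hle : (∫ q : ℝ×ℝ, ‖R3.indicator G (u,q)‖ ∂((volume : Measure ℝ).prod volume))
            ≤ ∫ q : ℝ×ℝ, (K * gammaDensity s lam u * (1+u)^N * momFun s lam N q.1)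
                * kerFun s u q.2 ∂((volume : Measure ℝ).prod volume) := by
          refine integral_mono_of_nonneg
            (Filter.Eventually.of_forall fun q => norm_nonneg _) ?_
            (Filter.Eventually.of_forall hb)
          have := bound_int (K := K) (N := N) hs hlam hu
          rwa [Measure.volume_eq_prod] at this
        have hval : (∫ q : ℝ×ℝ, (K * gammaDensity s lam u * (1+u)^N * momFun s lam N q.1)
            * kerFun s u q.2 ∂((volume : Measure ℝ).prod volume))
            = (K * gammaDensity s lam u * (1+u)^N * MN) * (u/(2*s)) := by
          rw [integral_prod_mul (fun v => K * gammaDensity s lam u * (1+u)^N * momFun s lam N v)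
            (kerFun s u), MeasureTheory.integral_const_mul, kerFun_integral hs hu, hMN]
        have hnn : 0 ≤ ∫ q : ℝ×ℝ, ‖R3.indicator G (u,q)‖ ∂((volume : Measure ℝ).prod volume) :=
          integral_nonneg fun q => norm_nonneg _
        rw [Real.norm_eq_abs, abs_of_nonneg hnn]
        refine (hle.trans (le_of_eq hval)).trans ?_
        rw [momFun_eq hs hlam (N+1) hu]
        have e1 : 0 ≤ gammaDensity s lam u := rho_nonneg hs hlam hu.le
        have e2 : 0 ≤ (1+u)^N := by positivity
        have e3 : (0:ℝ) < 2*s := by linarith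
        rw [pow_succ]
        rw [show K * MN / (2*s) * ((1+u)^N * (1+u) * gammaDensity s lam u)
            = (K * gammaDensity s lam u * (1+u)^N * MN) * ((1+u)/(2*s)) by ring]
        apply mul_le_mul_of_nonneg_left _ (by positivity)
        exact (div_le_div_iff_of_pos_right e3).2 (by linarith)
      · have hz : ∀ q : ℝ×ℝ, R3.indicator G (u,q) = 0 := fun q =>
          indicator_of_notMem (fun hw => hu hw.1) _
        simp only [hz, norm_zero, integral_zero, Real.norm_eq_abs, abs_zero]
        have hmz : momFun s lam (N+1) u = 0 :=
          indicator_of_notMem (show u ∉ Ioi (0:ℝ) from hu) _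
        rw [hmz, mul_zero]

/-- slicing identity used everywhere below -/
lemma slice_eq {u : ℝ} (hu : 0 < u) (v : ℝ) :
    (∫ a, R3.indicator G (u,v,a)) =
      (Ioi (0:ℝ)).indicator (fun v => ∫ a in Ioo 0 u, G (u,v,a)) v := by
  by_cases hv : 0 < v
  · rw [indicator_of_mem (show v ∈ Ioi (0:ℝ) from hv), ← integral_indicator measurableSet_Ioo]
    congr 1
    funext a
    by_cases ha : a ∈ Ioo 0 u
    · rw [indicator_of_mem ha,
        indicator_of_mem (show ((u,v,a) : ℝ×ℝ×ℝ) ∈ R3 from ⟨hu, hv, ha.1, ha.2⟩)]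
    · rw [indicator_of_notMem ha,
        indicator_of_notMem (show ((u,v,a) : ℝ×ℝ×ℝ) ∉ R3 from
          fun hw => ha ⟨hw.2.2.1, hw.2.2.2⟩)]
  · rw [indicator_of_notMem (show v ∉ Ioi (0:ℝ) from hv)]
    have hz : ∀ a : ℝ, R3.indicator G (u,v,a) = 0 := fun a =>
      indicator_of_notMem (fun hw => hv hw.2.1) _
    simp only [hz, integral_zero]

lemma inner_eq {u : ℝ} (hu : 0 < u)
    (hsec : Integrable (fun q : ℝ×ℝ => R3.indicator G (u,q))
      ((volume : Measure ℝ).prod volume)) :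
    ∫ q : ℝ×ℝ, R3.indicator G (u,q) ∂((volume : Measure ℝ).prod volume)
      = ∫ v in Ioi 0, ∫ a in Ioo 0 u, G (u,v,a) := by
  rw [integral_prod _ hsec]
  have : (fun v => ∫ a, R3.indicator G (u,v,a))
      = (Ioi (0:ℝ)).indicator (fun v => ∫ a in Ioo 0 u, G (u,v,a)) :=
    funext fun v => slice_eq hu v
  rw [this, integral_indicator measurableSet_Ioi]

lemma triple_eq (hs : 0 < s) (hlam : 0 < lam) (hGm : Measurable G) (hK : 0 ≤ K)
    (hGb : ∀ w ∈ R3, |G w| ≤ gammaDensity s lam w.1 * gammaDensity s lam w.2.1 *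
      (1 - w.2.2/w.1)^(2*s-1) * (K*(1+w.1+w.2.1)^N)) :
    ∫ w : ℝ×ℝ×ℝ, R3.indicator G w
      = ∫ u in Ioi (0:ℝ), ∫ v in Ioi (0:ℝ), ∫ a in Ioo 0 u, G (u,v,a) := by
  have hInt : Integrable (R3.indicator G)
      ((volume : Measure ℝ).prod ((volume : Measure ℝ).prod volume)) := by
    have := full_int hs hlam hGm hK hGb
    rwa [volume_triple] at this
  rw [volume_triple, integral_prod _ hInt]
  have hzero : ∀ u, u ∉ Ioi (0:ℝ) →
      (∫ q : ℝ×ℝ, R3.indicator G (u,q) ∂((volume : Measure ℝ).prod volume)) = 0 := by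
    intro u hu
    have hz : ∀ q : ℝ×ℝ, R3.indicator G (u,q) = 0 := fun q =>
      indicator_of_notMem (fun hw => hu hw.1) _
    simp only [hz, integral_zero]
  rw [← setIntegral_eq_integral_of_forall_compl_eq_zero hzero]
  refine setIntegral_congr_ae measurableSet_Ioi ?_
  filter_upwards [hInt.prod_right_ae] with u hsec hu
  exact inner_eq hu hsec

lemma v_level (hs : 0 < s) (hlam : 0 < lam) (hGm : Measurable G) (hK : 0 ≤ K)
    (hGb : ∀ w ∈ R3, |G w| ≤ gammaDensity s lam w.1 * gammaDensity s lam w.2.1 *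
      (1 - w.2.2/w.1)^(2*s-1) * (K*(1+w.1+w.2.1)^N))
    {u : ℝ} (hu : 0 < u) :
    IntegrableOn (fun v => ∫ a in Ioo 0 u, G (u,v,a)) (Ioi 0) := by
  have h := sec_int hs hlam hGm hK hGb hu
  rw [Measure.volume_eq_prod] at h
  have h2 := h.integral_prod_left
  rw [← integrable_indicator_iff measurableSet_Ioi]
  exact h2.congr (Filter.Eventually.of_forall fun v => slice_eq hu v)

lemma u_level (hs : 0 < s) (hlam : 0 < lam) (hGm : Measurable G) (hK : 0 ≤ K)
    (hGb : ∀ w ∈ R3, |G w| ≤ gammaDensity s lam w.1 * gammaDensity s lam w.2.1 *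
      (1 - w.2.2/w.1)^(2*s-1) * (K*(1+w.1+w.2.1)^N)) :
    IntegrableOn (fun u => ∫ v in Ioi (0:ℝ), ∫ a in Ioo 0 u, G (u,v,a)) (Ioi 0) := by
  have h : Integrable (R3.indicator G)
      ((volume : Measure ℝ).prod ((volume : Measure ℝ).prod volume)) := by
    have := full_int hs hlam hGm hK hGb
    rwa [volume_triple] at this
  have h2 := h.integral_prod_left
  rw [← integrable_indicator_iff measurableSet_Ioi]
  refine h2.congr (Filter.Eventually.of_forall fun u => ?_)
  by_cases hu : 0 < u
  · rw [indicator_of_mem (show u ∈ Ioi (0:ℝ) from hu)]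
    exact inner_eq hu (sec_int hs hlam hGm hK hGb hu)
  · rw [indicator_of_notMem (show u ∉ Ioi (0:ℝ) from hu)]
    have hz : ∀ q : ℝ×ℝ, R3.indicator G (u,q) = 0 := fun q =>
      indicator_of_notMem (fun hw => hu hw.1) _
    simp only [hz, integral_zero]

end Machinery


/-! ### Polynomial evaluation functions and bounds -/

def peF (p : MvPolynomial (Fin 2) ℝ) : ℝ → ℝ → ℝ := fun x y => MvPolynomial.eval ![x, y] p

def pSwap (p : MvPolynomial (Fin 2) ℝ) : MvPolynomial (Fin 2) ℝ :=
  MvPolynomial.rename Fin.rev p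

lemma peF_swap (p : MvPolynomial (Fin 2) ℝ) (x y : ℝ) :
    peF (pSwap p) x y = peF p y x := by
  unfold peF pSwap
  have hcomp : (![x, y] : Fin 2 → ℝ) ∘ Fin.rev = ![y, x] := by
    funext i; fin_cases i <;> rfl
  rw [MvPolynomial.eval_rename, hcomp]

lemma peF_cont (p : MvPolynomial (Fin 2) ℝ) :
    Continuous (fun z : ℝ×ℝ => peF p z.1 z.2) := by
  have h := poly_continuous p
  have h2 : Continuous (fun z : ℝ×ℝ => (![z.1, z.2] : Fin 2 → ℝ)) := by
    apply continuous_pi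
    intro i
    fin_cases i
    · exact continuous_fst
    · exact continuous_snd
  exact h.comp h2

lemma peF_bound (p : MvPolynomial (Fin 2) ℝ) :
    ∃ C : ℝ, 0 ≤ C ∧ ∃ n : ℕ, ∀ x y : ℝ, 0 ≤ x → 0 ≤ y →
      |peF p x y| ≤ C * (1+x+y)^n := by
  obtain ⟨C, hC, n, h⟩ := poly_bound p
  refine ⟨C, hC, n, fun x y hx hy => ?_⟩
  have := h ![x, y]
  rw [Fin.sum_univ_two, show (![x,y] 0) = x from rfl, show (![x,y] 1) = y from rfl,
    abs_of_nonneg hx, abs_of_nonneg hy] at this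
  rw [show (1:ℝ)+x+y = 1+(x+y) from by ring]
  exact this

lemma diff_rep (p : MvPolynomial (Fin 2) ℝ) :
    ∃ r : MvPolynomial (Fin 3) ℝ, ∀ x y a : ℝ,
      peF p (x - a) (y + a) - peF p x y = a * MvPolynomial.eval ![x,y,a] r :=
  diff_factor p

lemma eval3_bound (r : MvPolynomial (Fin 3) ℝ) :
    ∃ C : ℝ, 0 ≤ C ∧ ∃ n : ℕ, ∀ x y a : ℝ, 0 ≤ x → 0 ≤ y → 0 ≤ a → a ≤ x →
      |MvPolynomial.eval ![x,y,a] r| ≤ C * (1+x+y)^n := by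
  obtain ⟨C, hC, n, h⟩ := poly_bound r
  refine ⟨C * 2^n, by positivity, n, fun x y a hx hy ha hax => ?_⟩
  have h1 := h ![x, y, a]
  rw [Fin.sum_univ_three, show (![x,y,a] 0) = x from rfl, show (![x,y,a] 1) = y from rfl,
    show (![x,y,a] 2) = a from rfl, abs_of_nonneg hx, abs_of_nonneg hy, abs_of_nonneg ha] at h1
  refine h1.trans ?_
  have hle : 1 + (x + y + a) ≤ 2 * (1 + x + y) := by linarith
  have hpw := pow_le_pow_left₀ (by linarith : (0:ℝ) ≤ 1 + (x + y + a)) hle n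
  rw [mul_pow] at hpw
  calc C * (1+(x+y+a))^n ≤ C * (2^n * (1+x+y)^n) := by
        apply mul_le_mul_of_nonneg_left hpw hC
    _ = C * 2^n * (1+x+y)^n := by ring

/-! ### The core integrands -/

def core (s lam : ℝ) (f g : ℝ → ℝ → ℝ) (w : ℝ×ℝ×ℝ) : ℝ :=
  gammaDensity s lam w.1 * gammaDensity s lam w.2.1 *
    ((1 - w.2.2 / w.1) ^ (2 * s - 1) / w.2.2) *
    (f (w.1 - w.2.2) (w.2.1 + w.2.2) - f w.1 w.2.1) * g w.1 w.2.1

def coreD (s lam : ℝ) (p q : MvPolynomial (Fin 2) ℝ) (w : ℝ×ℝ×ℝ) : ℝ :=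
  gammaDensity s lam w.1 * gammaDensity s lam w.2.1 *
    ((1 - w.2.2 / w.1) ^ (2 * s - 1) / w.2.2) *
    (peF p (w.1 - w.2.2) (w.2.1 + w.2.2) - peF p w.1 w.2.1) *
    (peF q (w.1 - w.2.2) (w.2.1 + w.2.2) - peF q w.1 w.2.1)

lemma shift_meas : Measurable (fun w : ℝ×ℝ×ℝ => (w.1 - w.2.2, w.2.1 + w.2.2)) := by
  fun_prop

lemma proj_meas : Measurable (fun w : ℝ×ℝ×ℝ => (w.1, w.2.1)) := by fun_prop

lemma kerpart_meas {s : ℝ} :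
    Measurable (fun w : ℝ×ℝ×ℝ => (1 - w.2.2 / w.1) ^ (2*s - 1) / w.2.2) := by
  exact ((measurable_const.sub ((measurable_snd.comp measurable_snd).div
    measurable_fst)).pow measurable_const).div (measurable_snd.comp measurable_snd)

lemma peF_comp_cont (p : MvPolynomial (Fin 2) ℝ) {α : Type*} [TopologicalSpace α]
    {f g : α → ℝ} (hf : Continuous f) (hg : Continuous g) :
    Continuous (fun x => peF p (f x) (g x)) := by
  have h := poly_continuous p
  have h2 : Continuous (fun x : α => (![f x, g x] : Fin 2 → ℝ)) := by
    apply continuous_pi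
    intro i
    fin_cases i
    · exact hf
    · exact hg
  exact h.comp h2

lemma peF_shift_meas (p : MvPolynomial (Fin 2) ℝ) :
    Measurable (fun w : ℝ×ℝ×ℝ => peF p (w.1 - w.2.2) (w.2.1 + w.2.2)) :=
  (peF_comp_cont p (by fun_prop) (by fun_prop)).measurable

lemma peF_proj_meas (p : MvPolynomial (Fin 2) ℝ) :
    Measurable (fun w : ℝ×ℝ×ℝ => peF p w.1 w.2.1) :=
  (peF_comp_cont p (by fun_prop) (by fun_prop)).measurable

lemma rho_fst_meas {s lam : ℝ} : Measurable (fun w : ℝ×ℝ×ℝ => gammaDensity s lam w.1) :=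
  rho_meas.comp measurable_fst

lemma rho_snd_meas {s lam : ℝ} : Measurable (fun w : ℝ×ℝ×ℝ => gammaDensity s lam w.2.1) :=
  rho_meas.comp (measurable_fst.comp measurable_snd)

lemma core_meas {s lam : ℝ} (p q : MvPolynomial (Fin 2) ℝ) :
    Measurable (core s lam (peF p) (peF q)) := by
  unfold core
  exact (((rho_fst_meas.mul rho_snd_meas).mul kerpart_meas).mul
    ((peF_shift_meas p).sub (peF_proj_meas p))).mul (peF_proj_meas q)

lemma coreD_meas {s lam : ℝ} (p q : MvPolynomial (Fin 2) ℝ) :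
    Measurable (coreD s lam p q) := by
  unfold coreD
  exact (((rho_fst_meas.mul rho_snd_meas).mul kerpart_meas).mul
    ((peF_shift_meas p).sub (peF_proj_meas p))).mul
    ((peF_shift_meas q).sub (peF_proj_meas q))

lemma core_bound {s lam : ℝ} (hs : 0 < s) (hlam : 0 < lam) (p q : MvPolynomial (Fin 2) ℝ) :
    ∃ K : ℝ, 0 ≤ K ∧ ∃ N : ℕ, ∀ w ∈ R3,
      |core s lam (peF p) (peF q) w| ≤ gammaDensity s lam w.1 * gammaDensity s lam w.2.1 *
        (1 - w.2.2/w.1)^(2*s-1) * (K*(1+w.1+w.2.1)^N) := by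
  obtain ⟨r, hr⟩ := diff_rep p
  obtain ⟨C₁, hC₁, n₁, h₁⟩ := eval3_bound r
  obtain ⟨C₂, hC₂, n₂, h₂⟩ := peF_bound q
  refine ⟨C₁ * C₂, by positivity, n₁ + n₂, ?_⟩
  rintro ⟨u, v, a⟩ ⟨hu, hv, ha, hau⟩
  simp only at hu hv ha hau
  have e1 : 0 ≤ gammaDensity s lam u := rho_nonneg hs hlam hu.le
  have e2 : 0 ≤ gammaDensity s lam v := rho_nonneg hs hlam hv.le
  have e3 : 0 ≤ (1 - a/u)^(2*s-1) := by
    have : a / u < 1 := (div_lt_one hu).2 hau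
    exact rpow_nonneg (by linarith) _
  have hΔ : peF p (u - a) (v + a) - peF p u v = a * MvPolynomial.eval ![u,v,a] r := hr u v a
  have hcore : core s lam (peF p) (peF q) (u,v,a)
      = gammaDensity s lam u * gammaDensity s lam v * (1 - a/u)^(2*s-1)
        * (MvPolynomial.eval ![u,v,a] r * peF q u v) := by
    unfold core
    simp only
    rw [hΔ]
    field_simp
  rw [hcore]
  have hb1 := h₁ u v a hu.le hv.le ha.le hau.le
  have hb2 := h₂ u v hu.le hv.le
  have hprod : |MvPolynomial.eval ![u,v,a] r * peF q u v|
      ≤ (C₁ * C₂) * (1+u+v)^(n₁+n₂) := by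
    rw [abs_mul, pow_add]
    calc |MvPolynomial.eval ![u,v,a] r| * |peF q u v|
        ≤ (C₁ * (1+u+v)^n₁) * (C₂ * (1+u+v)^n₂) := by
          apply mul_le_mul hb1 hb2 (abs_nonneg _)
          positivity
      _ = C₁ * C₂ * ((1+u+v)^n₁ * (1+u+v)^n₂) := by ring
  calc |gammaDensity s lam u * gammaDensity s lam v * (1 - a/u)^(2*s-1)
        * (MvPolynomial.eval ![u,v,a] r * peF q u v)|
      = gammaDensity s lam u * gammaDensity s lam v * (1 - a/u)^(2*s-1)
        * |MvPolynomial.eval ![u,v,a] r * peF q u v| := by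
        rw [abs_mul, abs_of_nonneg (by positivity : (0:ℝ) ≤ gammaDensity s lam u *
          gammaDensity s lam v * (1 - a/u)^(2*s-1))]
    _ ≤ gammaDensity s lam u * gammaDensity s lam v * (1 - a/u)^(2*s-1)
        * ((C₁ * C₂)*(1+u+v)^(n₁+n₂)) := by
        apply mul_le_mul_of_nonneg_left hprod (by positivity)

lemma coreD_bound {s lam : ℝ} (hs : 0 < s) (hlam : 0 < lam) (p q : MvPolynomial (Fin 2) ℝ) :
    ∃ K : ℝ, 0 ≤ K ∧ ∃ N : ℕ, ∀ w ∈ R3,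
      |coreD s lam p q w| ≤ gammaDensity s lam w.1 * gammaDensity s lam w.2.1 *
        (1 - w.2.2/w.1)^(2*s-1) * (K*(1+w.1+w.2.1)^N) := by
  obtain ⟨r₁, hr₁⟩ := diff_rep p
  obtain ⟨C₁, hC₁, n₁, h₁⟩ := eval3_bound r₁
  obtain ⟨r₂, hr₂⟩ := diff_rep q
  obtain ⟨C₂, hC₂, n₂, h₂⟩ := eval3_bound r₂
  refine ⟨C₁ * C₂, by positivity, n₁ + n₂ + 1, ?_⟩
  rintro ⟨u, v, a⟩ ⟨hu, hv, ha, hau⟩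
  simp only at hu hv ha hau
  have e1 : 0 ≤ gammaDensity s lam u := rho_nonneg hs hlam hu.le
  have e2 : 0 ≤ gammaDensity s lam v := rho_nonneg hs hlam hv.le
  have e3 : 0 ≤ (1 - a/u)^(2*s-1) := by
    have : a / u < 1 := (div_lt_one hu).2 hau
    exact rpow_nonneg (by linarith) _
  have hcore : coreD s lam p q (u,v,a)
      = gammaDensity s lam u * gammaDensity s lam v * (1 - a/u)^(2*s-1)
        * (a * (MvPolynomial.eval ![u,v,a] r₁ * MvPolynomial.eval ![u,v,a] r₂)) := by
    unfold coreD
    simp only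
    rw [hr₁ u v a, hr₂ u v a]
    field_simp
  rw [hcore]
  have hb1 := h₁ u v a hu.le hv.le ha.le hau.le
  have hb2 := h₂ u v a hu.le hv.le ha.le hau.le
  have hprod : |a * (MvPolynomial.eval ![u,v,a] r₁ * MvPolynomial.eval ![u,v,a] r₂)|
      ≤ (C₁ * C₂) * (1+u+v)^(n₁+n₂+1) := by
    rw [abs_mul, abs_mul, abs_of_nonneg ha.le, pow_add, pow_add, pow_one]
    have hab : a ≤ 1+u+v := by linarith
    calc a * (|MvPolynomial.eval ![u,v,a] r₁| * |MvPolynomial.eval ![u,v,a] r₂|)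
        ≤ (1+u+v) * ((C₁ * (1+u+v)^n₁) * (C₂ * (1+u+v)^n₂)) := by
          apply mul_le_mul hab _ (by positivity) (by linarith)
          apply mul_le_mul hb1 hb2 (abs_nonneg _)
          positivity
      _ = C₁ * C₂ * ((1+u+v)^n₁ * (1+u+v)^n₂ * (1+u+v)) := by ring
  calc |gammaDensity s lam u * gammaDensity s lam v * (1 - a/u)^(2*s-1)
        * (a * (MvPolynomial.eval ![u,v,a] r₁ * MvPolynomial.eval ![u,v,a] r₂))|
      = gammaDensity s lam u * gammaDensity s lam v * (1 - a/u)^(2*s-1)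
        * |a * (MvPolynomial.eval ![u,v,a] r₁ * MvPolynomial.eval ![u,v,a] r₂)| := by
        rw [abs_mul, abs_of_nonneg (by positivity : (0:ℝ) ≤ gammaDensity s lam u *
          gammaDensity s lam v * (1 - a/u)^(2*s-1))]
    _ ≤ gammaDensity s lam u * gammaDensity s lam v * (1 - a/u)^(2*s-1)
        * ((C₁ * C₂)*(1+u+v)^(n₁+n₂+1)) := by
        apply mul_le_mul_of_nonneg_left hprod (by positivity)


/-! ### Transposed kernel integrals -/

section QLemmas

variable {s lam : ℝ} {G : ℝ×ℝ×ℝ → ℝ} {K : ℝ} {N : ℕ}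

lemma Q_meas (hGm : Measurable G) :
    StronglyMeasurable (fun z : ℝ×ℝ => ∫ a in Ioo 0 z.1, G (z.1, z.2, a)) := by
  set S : Set ((ℝ×ℝ)×ℝ) := {za | 0 < za.2 ∧ za.2 < za.1.1} with hS
  have hSm : MeasurableSet S := by
    rw [hS, setOf_and]
    exact (measurableSet_lt measurable_const measurable_snd).inter
      (measurableSet_lt measurable_snd (measurable_fst.comp measurable_fst))
  have hind : Measurable (S.indicator (fun za : (ℝ×ℝ)×ℝ => G (za.1.1, za.1.2, za.2))) :=
    (hGm.comp (by fun_prop)).indicator hSm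
  have h1 := hind.stronglyMeasurable.integral_prod_right'
    (ν := (volume : Measure ℝ))
  have heq : (fun z : ℝ×ℝ => ∫ a in Ioo 0 z.1, G (z.1,z.2,a))
      = fun z : ℝ×ℝ => ∫ a, (S.indicator (fun za : (ℝ×ℝ)×ℝ => G (za.1.1, za.1.2, za.2))) (z, a) := by
    funext z
    rw [← integral_indicator measurableSet_Ioo]
    refine integral_congr_ae (Filter.Eventually.of_forall fun a => ?_)
    beta_reduce
    by_cases ha : a ∈ Ioo 0 z.1
    · rw [indicator_of_mem ha, indicator_of_mem (show (z,a) ∈ S from ⟨ha.1, ha.2⟩)]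
    · rw [indicator_of_notMem ha,
        indicator_of_notMem (show (z,a) ∉ S from fun hm => ha ⟨hm.1, hm.2⟩)]
  rw [heq]
  exact h1

lemma Q_meas' (hGm : Measurable G) :
    StronglyMeasurable (fun z : ℝ×ℝ => ∫ a in Ioo 0 z.2, G (z.2, z.1, a)) := by
  set S : Set ((ℝ×ℝ)×ℝ) := {za | 0 < za.2 ∧ za.2 < za.1.2} with hS
  have hSm : MeasurableSet S := by
    rw [hS, setOf_and]
    exact (measurableSet_lt measurable_const measurable_snd).inter
      (measurableSet_lt measurable_snd (measurable_snd.comp measurable_fst))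
  have hind : Measurable (S.indicator (fun za : (ℝ×ℝ)×ℝ => G (za.1.2, za.1.1, za.2))) :=
    (hGm.comp (by fun_prop)).indicator hSm
  have h1 := hind.stronglyMeasurable.integral_prod_right'
    (ν := (volume : Measure ℝ))
  have heq : (fun z : ℝ×ℝ => ∫ a in Ioo 0 z.2, G (z.2,z.1,a))
      = fun z : ℝ×ℝ => ∫ a, (S.indicator (fun za : (ℝ×ℝ)×ℝ => G (za.1.2, za.1.1, za.2))) (z, a) := by
    funext z
    rw [← integral_indicator measurableSet_Ioo]
    refine integral_congr_ae (Filter.Eventually.of_forall fun a => ?_)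
    beta_reduce
    by_cases ha : a ∈ Ioo 0 z.2
    · rw [indicator_of_mem ha, indicator_of_mem (show (z,a) ∈ S from ⟨ha.1, ha.2⟩)]
    · rw [indicator_of_notMem ha,
        indicator_of_notMem (show (z,a) ∉ S from fun hm => ha ⟨hm.1, hm.2⟩)]
  rw [heq]
  exact h1

lemma Q_bound (hs : 0 < s) (hlam : 0 < lam) (hK : 0 ≤ K)
    (hGb : ∀ w ∈ R3, |G w| ≤ gammaDensity s lam w.1 * gammaDensity s lam w.2.1 *
      (1 - w.2.2/w.1)^(2*s-1) * (K*(1+w.1+w.2.1)^N))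
    {v u : ℝ} (hv : 0 < v) (hu : 0 < u) :
    ‖∫ a in Ioo 0 v, G (v, u, a)‖ ≤
      (K/(2*s)) * ((1+v)^(N+1) * gammaDensity s lam v) * ((1+u)^(N+1) * gammaDensity s lam u) := by
  have e1 : 0 ≤ gammaDensity s lam v := rho_nonneg hs hlam hv.le
  have e2 : 0 ≤ gammaDensity s lam u := rho_nonneg hs hlam hu.le
  have hdom : IntegrableOn (fun a : ℝ =>
      (gammaDensity s lam v * gammaDensity s lam u * (K*(1+v+u)^N)) * (1 - a/v)^(2*s-1))
      (Ioo 0 v) := (ker_integrableOn hs hv).const_mul _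
  have hb : ∀ᵐ a ∂(volume.restrict (Ioo 0 v)), ‖G (v,u,a)‖ ≤
      (gammaDensity s lam v * gammaDensity s lam u * (K*(1+v+u)^N)) * (1 - a/v)^(2*s-1) := by
    filter_upwards [ae_restrict_mem measurableSet_Ioo] with a ha
    have := hGb (v,u,a) ⟨hv, hu, ha.1, ha.2⟩
    rw [Real.norm_eq_abs]
    exact this.trans (le_of_eq (by ring))
  have h1 := norm_integral_le_of_norm_le hdom hb
  have h2 : (∫ a in Ioo 0 v,
      (gammaDensity s lam v * gammaDensity s lam u * (K*(1+v+u)^N)) * (1 - a/v)^(2*s-1))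
      = (gammaDensity s lam v * gammaDensity s lam u * (K*(1+v+u)^N)) * (v/(2*s)) := by
    rw [MeasureTheory.integral_const_mul, ker_value hs hv]
  rw [h2] at h1
  refine h1.trans ?_
  have e3 : (1+v+u)^N ≤ (1+v)^N*(1+u)^N := pow_one_add_add hv.le hu.le N
  have hkey : (1+v+u)^N * v ≤ (1+v)^(N+1) * (1+u)^(N+1) := by
    calc (1+v+u)^N * v ≤ ((1+v)^N*(1+u)^N) * v := mul_le_mul_of_nonneg_right e3 hv.le
      _ ≤ ((1+v)^N*(1+u)^N) * ((1+v)*(1+u)) := by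
          apply mul_le_mul_of_nonneg_left _ (by positivity)
          nlinarith
      _ = (1+v)^(N+1) * (1+u)^(N+1) := by rw [pow_succ, pow_succ]; ring
  have e4 : (0:ℝ) < 2*s := by linarith
  rw [show gammaDensity s lam v * gammaDensity s lam u * (K*(1+v+u)^N) * (v/(2*s))
      = (gammaDensity s lam v * gammaDensity s lam u * K / (2*s)) * ((1+v+u)^N * v) by ring,
    show (K/(2*s)) * ((1+v)^(N+1) * gammaDensity s lam v) * ((1+u)^(N+1) * gammaDensity s lam u)
      = (gammaDensity s lam v * gammaDensity s lam u * K / (2*s))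
        * ((1+v)^(N+1) * (1+u)^(N+1)) by ring]
  apply mul_le_mul_of_nonneg_left hkey (by positivity)

lemma Qv_int (hs : 0 < s) (hlam : 0 < lam) (hGm : Measurable G) (hK : 0 ≤ K)
    (hGb : ∀ w ∈ R3, |G w| ≤ gammaDensity s lam w.1 * gammaDensity s lam w.2.1 *
      (1 - w.2.2/w.1)^(2*s-1) * (K*(1+w.1+w.2.1)^N))
    {u : ℝ} (hu : 0 < u) :
    IntegrableOn (fun v => ∫ a in Ioo 0 v, G (v,u,a)) (Ioi 0) := by
  refine Integrable.mono'
    ((moment hs hlam (N+1)).const_mul ((K/(2*s)) * ((1+u)^(N+1) * gammaDensity s lam u))) ?_ ?_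
  · exact ((Q_meas hGm).comp_measurable
      (measurable_id.prodMk measurable_const)).aestronglyMeasurable
  · filter_upwards [ae_restrict_mem measurableSet_Ioi] with v hv
    have h := Q_bound hs hlam hK hGb (show (0:ℝ) < v from hv) hu
    exact h.trans (le_of_eq (by ring))

lemma Qu_level (hs : 0 < s) (hlam : 0 < lam) (hGm : Measurable G) (hK : 0 ≤ K)
    (hGb : ∀ w ∈ R3, |G w| ≤ gammaDensity s lam w.1 * gammaDensity s lam w.2.1 *
      (1 - w.2.2/w.1)^(2*s-1) * (K*(1+w.1+w.2.1)^N)) :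
    IntegrableOn (fun u => ∫ v in Ioi (0:ℝ), ∫ a in Ioo 0 v, G (v,u,a)) (Ioi 0) := by
  set momC := ∫ v in Ioi (0:ℝ), (1+v)^(N+1) * gammaDensity s lam v with hmomC
  have hmomC0 : 0 ≤ momC := setIntegral_nonneg measurableSet_Ioi (fun v hv => by
    have h0 : (0:ℝ) < v := hv
    have := rho_nonneg hs hlam h0.le
    positivity)
  refine Integrable.mono' ((moment hs hlam (N+1)).const_mul ((K/(2*s)) * momC)) ?_ ?_
  · -- measurability
    have hQm : StronglyMeasurable (fun z : ℝ×ℝ => ∫ a in Ioo 0 z.2, G (z.2, z.1, a)) :=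
      Q_meas' hGm
    have hind := hQm.indicator
      (show MeasurableSet {z : ℝ×ℝ | 0 < z.2} from
        measurableSet_lt measurable_const measurable_snd)
    have h2 := hind.integral_prod_right' (ν := (volume : Measure ℝ))
    have heq : (fun u => ∫ v in Ioi (0:ℝ), ∫ a in Ioo 0 v, G (v,u,a))
        = fun u => ∫ v, ({z : ℝ×ℝ | 0 < z.2}.indicator
            (fun z : ℝ×ℝ => ∫ a in Ioo 0 z.2, G (z.2, z.1, a))) (u, v) := by
      funext u
      rw [← integral_indicator measurableSet_Ioi]
      refine integral_congr_ae (Filter.Eventually.of_forall fun v => ?_)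
      beta_reduce
      by_cases hv : 0 < v
      · rw [indicator_of_mem (show v ∈ Ioi (0:ℝ) from hv),
          indicator_of_mem (show ((u,v) : ℝ×ℝ) ∈ {z : ℝ×ℝ | 0 < z.2} from hv)]
      · rw [indicator_of_notMem (show v ∉ Ioi (0:ℝ) from hv),
          indicator_of_notMem (show ((u,v) : ℝ×ℝ) ∉ {z : ℝ×ℝ | 0 < z.2} from hv)]
    rw [heq]
    exact h2.aestronglyMeasurable
  · filter_upwards [ae_restrict_mem measurableSet_Ioi] with u hu
    have hu0 : (0:ℝ) < u := hu
    have hgu : 0 ≤ gammaDensity s lam u := rho_nonneg hs hlam hu0.le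
    have hdom2 : IntegrableOn (fun v =>
        ((K/(2*s)) * ((1+u)^(N+1) * gammaDensity s lam u)) * ((1+v)^(N+1) * gammaDensity s lam v))
        (Ioi 0) := (moment hs hlam (N+1)).const_mul _
    have hb : ∀ᵐ v ∂(volume.restrict (Ioi 0)), ‖∫ a in Ioo 0 v, G (v,u,a)‖ ≤
        ((K/(2*s)) * ((1+u)^(N+1) * gammaDensity s lam u)) * ((1+v)^(N+1) * gammaDensity s lam v) := by
      filter_upwards [ae_restrict_mem measurableSet_Ioi] with v hv
      have h := Q_bound hs hlam hK hGb (show (0:ℝ) < v from hv) hu0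
      exact h.trans (le_of_eq (by ring))
    have h1 := norm_integral_le_of_norm_le hdom2 hb
    refine h1.trans ?_
    rw [MeasureTheory.integral_const_mul, ← hmomC]
    exact le_of_eq (by ring)

lemma Qswap_int (hs : 0 < s) (hlam : 0 < lam) (hGm : Measurable G) (hK : 0 ≤ K)
    (hGb : ∀ w ∈ R3, |G w| ≤ gammaDensity s lam w.1 * gammaDensity s lam w.2.1 *
      (1 - w.2.2/w.1)^(2*s-1) * (K*(1+w.1+w.2.1)^N)) :
    Integrable (Function.uncurry fun u v => ∫ a in Ioo 0 v, G (v,u,a))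
      ((volume.restrict (Ioi 0)).prod (volume.restrict (Ioi 0))) := by
  refine Integrable.mono'
    (Integrable.mul_prod (f := fun u => (K/(2*s)) * ((1+u)^(N+1) * gammaDensity s lam u))
      (g := fun v => (1+v)^(N+1) * gammaDensity s lam v)
      ((moment hs hlam (N+1)).const_mul _) (moment hs hlam (N+1))) ?_ ?_
  · exact ((Q_meas hGm).comp_measurable measurable_swap).aestronglyMeasurable
  · rw [Measure.prod_restrict]
    filter_upwards [ae_restrict_mem (measurableSet_Ioi.prod measurableSet_Ioi)] with z hz
    have hz1 : (0:ℝ) < z.1 := hz.1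
    have hz2 : (0:ℝ) < z.2 := hz.2
    have h := Q_bound hs hlam hK hGb hz2 hz1
    exact h.trans (le_of_eq (by ring))

end QLemmas

/-! ### Kernel symmetry and the shear identity -/

lemma kernel_sym {s lam : ℝ} (hs : 0 < s) {u v a : ℝ}
    (ha : 0 < a) (hau : a < u) (hv : 0 < v) :
    gammaDensity s lam (v+a) * gammaDensity s lam (u-a) * (1 - a/(v+a))^(2*s-1)
      = gammaDensity s lam u * gammaDensity s lam v * (1 - a/u)^(2*s-1) := by
  have hu : 0 < u := ha.trans hau
  have hva : 0 < v + a := by linarith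
  have hua : 0 < u - a := by linarith
  have h1 : 1 - a/(v+a) = v/(v+a) := by field_simp; ring
  have h2 : 1 - a/u = (u-a)/u := by field_simp
  rw [h1, h2, Real.div_rpow hv.le hva.le, Real.div_rpow hua.le hu.le]
  unfold gammaDensity
  set c := lam ^ (2*s) / Real.Gamma (2*s) with hc
  set t := 2*s - 1 with ht
  have hne1 : (v+a)^t ≠ 0 := (rpow_pos_of_pos hva _).ne'
  have hne2 : u^t ≠ 0 := (rpow_pos_of_pos hu _).ne'
  have hexp : Real.exp (-(lam*(v+a))) * Real.exp (-(lam*(u-a)))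
      = Real.exp (-(lam*u)) * Real.exp (-(lam*v)) := by
    rw [← Real.exp_add, ← Real.exp_add]
    ring_nf
  have c1 : (v+a)^t * (v^t/(v+a)^t) = v^t := by field_simp
  have c2 : u^t * ((u-a)^t/u^t) = (u-a)^t := by field_simp
  calc c * (v+a)^t * Real.exp (-(lam*(v+a))) * (c * (u-a)^t * Real.exp (-(lam*(u-a))))
        * (v^t/(v+a)^t)
      = c * c * ((v+a)^t * (v^t/(v+a)^t)) * (u-a)^t
        * (Real.exp (-(lam*(v+a))) * Real.exp (-(lam*(u-a)))) := by ring
    _ = c * c * v^t * (u-a)^t * (Real.exp (-(lam*u)) * Real.exp (-(lam*v))) := by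
        rw [c1, hexp]
    _ = c * u^t * Real.exp (-(lam*u)) * (c * v^t * Real.exp (-(lam*v))) * ((u-a)^t/u^t) := by
        rw [show c * u^t * Real.exp (-(lam*u)) * (c * v^t * Real.exp (-(lam*v))) * ((u-a)^t/u^t)
            = c * c * v^t * (u^t * ((u-a)^t/u^t)) * (Real.exp (-(lam*u)) * Real.exp (-(lam*v)))
            by ring, c2]

lemma core_shift {s lam : ℝ} (hs : 0 < s) (p q : MvPolynomial (Fin 2) ℝ)
    {w : ℝ×ℝ×ℝ} (hw : w ∈ R3) :
    core s lam (peF (pSwap p)) (peF (pSwap q)) (sigmaf w)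
      = gammaDensity s lam w.1 * gammaDensity s lam w.2.1 *
        ((1 - w.2.2/w.1)^(2*s-1)/w.2.2) *
        (peF p w.1 w.2.1 - peF p (w.1-w.2.2) (w.2.1+w.2.2)) *
        (peF q (w.1-w.2.2) (w.2.1+w.2.2)) := by
  obtain ⟨u, v, a⟩ := w
  obtain ⟨hu, hv, ha, hau⟩ := hw
  simp only at hu hv ha hau ⊢
  unfold core sigmaf
  simp only
  rw [show v + a - a = v by ring, show u - a + a = u by ring]
  simp only [peF_swap]
  have hker := kernel_sym (lam := lam) hs ha hau hv
  linear_combination ((peF p u v - peF p (u-a) (v+a)) * peF q (u-a) (v+a) / a) * hker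


/-- the target of the shear change of variables -/
def coreT (s lam : ℝ) (p q : MvPolynomial (Fin 2) ℝ) (w : ℝ×ℝ×ℝ) : ℝ :=
  gammaDensity s lam w.1 * gammaDensity s lam w.2.1 *
    ((1 - w.2.2 / w.1) ^ (2 * s - 1) / w.2.2) *
    (peF p w.1 w.2.1 - peF p (w.1 - w.2.2) (w.2.1 + w.2.2)) *
    peF q (w.1 - w.2.2) (w.2.1 + w.2.2)

lemma core_shift' {s lam : ℝ} (hs : 0 < s) (p q : MvPolynomial (Fin 2) ℝ)
    {w : ℝ×ℝ×ℝ} (hw : w ∈ R3) :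
    core s lam (peF (pSwap p)) (peF (pSwap q)) (sigmaf w) = coreT s lam p q w := by
  rw [core_shift hs p q hw]
  unfold coreT
  rfl

lemma coreT_meas {s lam : ℝ} (p q : MvPolynomial (Fin 2) ℝ) :
    Measurable (coreT s lam p q) := by
  unfold coreT
  exact (((rho_fst_meas.mul rho_snd_meas).mul kerpart_meas).mul
    ((peF_proj_meas p).sub (peF_shift_meas p))).mul (peF_shift_meas q)

lemma pointwise_split (s lam : ℝ) (p q : MvPolynomial (Fin 2) ℝ) (u v : ℝ) :
    gammaDensity s lam u * gammaDensity s lam v * (bondGen s (peF p) u v * peF q u v)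
      = (∫ a in Ioo 0 u, core s lam (peF p) (peF q) (u,v,a))
        + (∫ a in Ioo 0 v, core s lam (peF (pSwap p)) (peF (pSwap q)) (v,u,a)) := by
  unfold bondGen
  have hA : gammaDensity s lam u * gammaDensity s lam v * peF q u v
        * (∫ a in Ioo 0 u, (1 - a/u)^(2*s-1)/a * (peF p (u-a) (v+a) - peF p u v))
      = ∫ a in Ioo 0 u, core s lam (peF p) (peF q) (u,v,a) := by
    rw [← MeasureTheory.integral_const_mul]
    refine setIntegral_congr_fun measurableSet_Ioo (fun a _ => ?_)
    unfold core
    simp only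
    ring
  have hB : gammaDensity s lam u * gammaDensity s lam v * peF q u v
        * (∫ a in Ioo 0 v, (1 - a/v)^(2*s-1)/a * (peF p (u+a) (v-a) - peF p u v))
      = ∫ a in Ioo 0 v, core s lam (peF (pSwap p)) (peF (pSwap q)) (v,u,a) := by
    rw [← MeasureTheory.integral_const_mul]
    refine setIntegral_congr_fun measurableSet_Ioo (fun a _ => ?_)
    unfold core
    simp only [peF_swap]
    ring
  rw [← hA, ← hB]
  ring

lemma oneside {s lam : ℝ} (hs : 0 < s) (hlam : 0 < lam) (p q : MvPolynomial (Fin 2) ℝ) :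
    (∫ y₁ in Ioi (0:ℝ), ∫ y₂ in Ioi (0:ℝ),
        gammaDensity s lam y₁ * gammaDensity s lam y₂ *
          (bondGen s (peF p) y₁ y₂ * peF q y₁ y₂))
      = - ∫ w : ℝ×ℝ×ℝ, R3.indicator (coreD s lam p q) w := by
  obtain ⟨K₁, hK₁, N₁, hb₁⟩ := core_bound hs hlam p q
  obtain ⟨K₂, hK₂, N₂, hb₂⟩ := core_bound hs hlam (pSwap p) (pSwap q)
  have hm₁ := core_meas (s := s) (lam := lam) p q
  have hm₂ := core_meas (s := s) (lam := lam) (pSwap p) (pSwap q)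
  -- Step 1: split the generator into the two kernel integrals
  have e1 : (∫ y₁ in Ioi (0:ℝ), ∫ y₂ in Ioi (0:ℝ),
        gammaDensity s lam y₁ * gammaDensity s lam y₂ *
          (bondGen s (peF p) y₁ y₂ * peF q y₁ y₂))
      = ∫ u in Ioi (0:ℝ),
          ((∫ v in Ioi (0:ℝ), ∫ a in Ioo 0 u, core s lam (peF p) (peF q) (u,v,a))
            + (∫ v in Ioi (0:ℝ), ∫ a in Ioo 0 v,
                core s lam (peF (pSwap p)) (peF (pSwap q)) (v,u,a))) := by
    refine setIntegral_congr_fun measurableSet_Ioi (fun u hu => ?_)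
    have hu0 : (0:ℝ) < u := hu
    rw [setIntegral_congr_fun measurableSet_Ioi
      (fun v _ => pointwise_split s lam p q u v)]
    exact integral_add (v_level hs hlam hm₁ hK₁ hb₁ hu0) (Qv_int hs hlam hm₂ hK₂ hb₂ hu0)
  rw [e1, integral_add (u_level hs hlam hm₁ hK₁ hb₁) (Qu_level hs hlam hm₂ hK₂ hb₂)]
  -- Step 2: first term is the triple integral of core p q
  rw [← triple_eq hs hlam hm₁ hK₁ hb₁]
  -- Step 3: second term, Fubini swap then triple integral of core p̃ q̃
  rw [MeasureTheory.integral_integral_swap (Qswap_int hs hlam hm₂ hK₂ hb₂),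
    ← triple_eq hs hlam hm₂ hK₂ hb₂]
  -- Step 4: shear change of variables
  have hmp : MeasurePreserving (⇑sigmaE) (volume : Measure (ℝ×ℝ×ℝ)) volume := sigma_mp
  have hpt : ∀ w : ℝ×ℝ×ℝ, R3.indicator (core s lam (peF (pSwap p)) (peF (pSwap q))) (sigmaf w)
      = R3.indicator (coreT s lam p q) w := by
    intro w
    by_cases hw : w ∈ R3
    · rw [indicator_of_mem ((sigma_preimage_R3 w).2 hw), indicator_of_mem hw]
      exact core_shift' hs p q hw
    · rw [indicator_of_notMem (fun h => hw ((sigma_preimage_R3 w).1 h)),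
        indicator_of_notMem hw]
  have e6 : (∫ w : ℝ×ℝ×ℝ, R3.indicator (core s lam (peF (pSwap p)) (peF (pSwap q))) w)
      = ∫ w : ℝ×ℝ×ℝ, R3.indicator (coreT s lam p q) w := by
    rw [← MeasurePreserving.integral_comp' hmp
      (R3.indicator (core s lam (peF (pSwap p)) (peF (pSwap q))))]
    exact integral_congr_ae (Filter.Eventually.of_forall fun w => hpt w)
  rw [e6]
  -- Step 5: combine into the Dirichlet form
  have hG₁int : Integrable (R3.indicator (core s lam (peF p) (peF q)))
      (volume : Measure (ℝ×ℝ×ℝ)) := full_int hs hlam hm₁ hK₁ hb₁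
  have hG₃int : Integrable (R3.indicator (coreT s lam p q)) (volume : Measure (ℝ×ℝ×ℝ)) := by
    have h2 := (hmp.integrable_comp_emb sigmaE.measurableEmbedding).2
      (full_int hs hlam hm₂ hK₂ hb₂)
    have h3 : Integrable (fun w => R3.indicator
        (core s lam (peF (pSwap p)) (peF (pSwap q))) (sigmaf w))
        (volume : Measure (ℝ×ℝ×ℝ)) := h2
    rwa [show (fun w => R3.indicator (core s lam (peF (pSwap p)) (peF (pSwap q))) (sigmaf w))
        = R3.indicator (coreT s lam p q) from funext hpt] at h3
  rw [← integral_add hG₁int hG₃int]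
  have e8 : (fun w => R3.indicator (core s lam (peF p) (peF q)) w
        + R3.indicator (coreT s lam p q) w)
      = fun w => -(R3.indicator (coreD s lam p q) w) := by
    funext w
    by_cases hw : w ∈ R3
    · rw [indicator_of_mem hw, indicator_of_mem hw, indicator_of_mem hw]
      unfold core coreT coreD
      ring
    · rw [indicator_of_notMem hw, indicator_of_notMem hw, indicator_of_notMem hw]
      simp
  rw [e8, integral_neg]

lemma coreD_comm {s lam : ℝ} (p q : MvPolynomial (Fin 2) ℝ) :
    coreD s lam q p = coreD s lam p q := by
  funext w
  unfold coreD
  ring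

/-- Reversibility of the bulk exchange generator on a single bond with respect to the
product of two Gamma(2s, lam) distributions, on polynomial functions. -/
theorem bond_reversibility (s lam : ℝ) (hs : 0 < s) (hlam : 0 < lam)
    (p q : MvPolynomial (Fin 2) ℝ) :
    (∫ y₁ in Set.Ioi (0 : ℝ), ∫ y₂ in Set.Ioi (0 : ℝ),
        gammaDensity s lam y₁ * gammaDensity s lam y₂ *
          (bondGen s (fun z₁ z₂ => MvPolynomial.eval ![z₁, z₂] p) y₁ y₂ *
            MvPolynomial.eval ![y₁, y₂] q))
    = ∫ y₁ in Set.Ioi (0 : ℝ), ∫ y₂ in Set.Ioi (0 : ℝ),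
        gammaDensity s lam y₁ * gammaDensity s lam y₂ *
          (MvPolynomial.eval ![y₁, y₂] p *
            bondGen s (fun z₁ z₂ => MvPolynomial.eval ![z₁, z₂] q) y₁ y₂) := by
  have h1 := oneside hs hlam p q
  have h2 := oneside hs hlam q p
  have hRHS : (∫ y₁ in Ioi (0:ℝ), ∫ y₂ in Ioi (0:ℝ),
        gammaDensity s lam y₁ * gammaDensity s lam y₂ *
          (peF p y₁ y₂ * bondGen s (peF q) y₁ y₂))
      = ∫ y₁ in Ioi (0:ℝ), ∫ y₂ in Ioi (0:ℝ),
        gammaDensity s lam y₁ * gammaDensity s lam y₂ *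
          (bondGen s (peF q) y₁ y₂ * peF p y₁ y₂) := by
    refine setIntegral_congr_fun measurableSet_Ioi (fun y₁ _ => ?_)
    refine setIntegral_congr_fun measurableSet_Ioi (fun y₂ _ => ?_)
    ring
  have hmain : (∫ y₁ in Ioi (0:ℝ), ∫ y₂ in Ioi (0:ℝ),
        gammaDensity s lam y₁ * gammaDensity s lam y₂ *
          (bondGen s (peF p) y₁ y₂ * peF q y₁ y₂))
      = ∫ y₁ in Ioi (0:ℝ), ∫ y₂ in Ioi (0:ℝ),
        gammaDensity s lam y₁ * gammaDensity s lam y₂ *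
          (peF p y₁ y₂ * bondGen s (peF q) y₁ y₂) := by
    rw [h1, hRHS, h2, coreD_comm]
  exact hmain

end HeatModel
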